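/- Let G be a finite abelian group and n ≥ 1. Set m = max{⌊⌊D(G ⊕ C_n)/n⌋·n/2⌋, ⌊D(G)/n⌋·n}. Then s_{≤m}(G) ≤ D(G ⊕ C_n), i.e., every sequence over G of length at least D(G ⊕ C_n) contains a nonempty zero-sum subsequence of length at most m. -/

import Mathlib

open Multiset

/-- A nonempty zero-sum sequence (multiset) over `G`. -/
def IsZeroSumSeq {G : Type*} [AddCommGroup G] (S : Multiset G) : Prop :=
  S ≠ 0 ∧ S.sum = 0

/-- A minimal zero-sum sequence: nonempty, zero-sum, and with no proper
nonempty zero-sum subsequence. -/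
def IsMinZeroSum {G : Type*} [AddCommGroup G] (S : Multiset G) : Prop :=
  S ≠ 0 ∧ S.sum = 0 ∧ ∀ T : Multiset G, T ≤ S → T ≠ 0 → T.sum = 0 → T = S

/-- `ζ` is a factorization of `B` into minimal zero-sum sequences. -/
def IsFactorization {G : Type*} [AddCommGroup G] (ζ : Multiset (Multiset G))
    (B : Multiset G) : Prop :=
  ζ.sum = B ∧ ∀ A ∈ ζ, IsMinZeroSum A

/-- The set of lengths `L(B)` of factorizations of `B` into minimal zero-sum
sequences. -/
def lengthSet {G : Type*} [AddCommGroup G] (B : Multiset G) : Set ℕ :=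
  { n | ∃ ζ : Multiset (Multiset G), IsFactorization ζ B ∧ Multiset.card ζ = n }

/-- `max L(B)`, the maximal length of a factorization of `B` into minimal
zero-sum sequences. -/
noncomputable def maxL {G : Type*} [AddCommGroup G] (B : Multiset G) : ℕ :=
  sSup (lengthSet B)

/-- `S` contains `k` disjoint nonempty zero-sum subsequences. -/
def HasKDisjointZeroSum {G : Type*} [AddCommGroup G] (k : ℕ) (S : Multiset G) : Prop :=
  ∃ T : Multiset (Multiset G), Multiset.card T = k ∧
    (∀ A ∈ T, IsZeroSumSeq A) ∧ T.sum ≤ S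

/-- The `k`-wise Davenport constant: the smallest `ℓ` such that every sequence
over `G` of length at least `ℓ` has `k` disjoint nonempty zero-sum
subsequences. -/
noncomputable def Dk (G : Type*) [AddCommGroup G] (k : ℕ) : ℕ :=
  sInf { ℓ : ℕ | ∀ S : Multiset G, ℓ ≤ Multiset.card S → HasKDisjointZeroSum k S }

/-- `s_{≤ k}(G)` as an extended natural number: the smallest `m` such that every
sequence over `G` of length at least `m` has a nonempty zero-sum subsequence of
length at most `k`. -/
noncomputable def sLE (G : Type*) [AddCommGroup G] (k : ℕ) : ℕ∞ :=
  sInf { m : ℕ∞ | ∀ S : Multiset G, m ≤ (Multiset.card S : ℕ∞) →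
    ∃ T ≤ S, T ≠ 0 ∧ T.sum = 0 ∧ Multiset.card T ≤ k }

/-- `s_{≤ k}(G)` as a natural number (used when it is known to be finite). -/
noncomputable def sleN (G : Type*) [AddCommGroup G] (k : ℕ) : ℕ :=
  sInf { m : ℕ | ∀ S : Multiset G, m ≤ Multiset.card S →
    ∃ T ≤ S, T ≠ 0 ∧ T.sum = 0 ∧ Multiset.card T ≤ k }

/-- `η(G) = s_{≤ exp(G)}(G)`. -/
noncomputable def etaC (G : Type*) [AddCommGroup G] : ℕ :=
  sleN G (AddMonoid.exponent G)


lemma exists_zero_sum_of_card_le {H : Type*} [AddCommGroup H] [Fintype H]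
    (S : Multiset H) (h : Fintype.card H ≤ Multiset.card S) :
    ∃ T ≤ S, T ≠ 0 ∧ T.sum = 0 := by
  set L := S.toList with hL
  have hlen : L.length = Multiset.card S := Multiset.length_toList S
  have hni : ¬ Function.Injective (fun i : Fin (Fintype.card H + 1) => (L.take i).sum) := by
    intro hinj
    have := Fintype.card_le_of_injective _ hinj
    simp at this
  rw [Function.not_injective_iff] at hni
  obtain ⟨i, j, hsum, hne⟩ := hni
  wlog hij : (i : ℕ) < (j : ℕ) generalizing i j
  · exact this j i hsum.symm hne.symm (by simp [Fin.ext_iff] at hne; omega)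
  set M := (L.drop i).take (j - i) with hM
  have hsplit : L.take j = L.take i ++ M := by
    rw [hM, ← List.take_add]
    congr 1; omega
  have hMsum : M.sum = 0 := by
    have h2 := hsum
    rw [hsplit, List.sum_append] at h2
    exact (left_eq_add.mp h2)
  have hjl : (j : ℕ) ≤ L.length := by
    have := j.isLt; omega
  have hMne : M ≠ [] := by
    rw [hM, ← List.length_pos_iff]
    rw [List.length_take, List.length_drop]
    omega
  refine ⟨(M : Multiset H), ?_, by simpa using hMne, by simpa using hMsum⟩
  have hinfix : M <:+: L := ⟨L.take i, L.drop j, by rw [← hsplit]; simp⟩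
  calc (M : Multiset H) ≤ (L : Multiset H) := Multiset.coe_le.mpr hinfix.sublist.subperm
    _ = S := by rw [hL]; exact Multiset.coe_toList S

/-- Defining property of the Davenport constant `Dk H 1` for finite `H`. -/
lemma Dk_one_spec {H : Type*} [AddCommGroup H] [Fintype H] :
    ∀ S : Multiset H, Dk H 1 ≤ Multiset.card S →
      ∃ T ≤ S, T ≠ 0 ∧ T.sum = 0 := by
  have hmem : Dk H 1 ∈ { ℓ : ℕ | ∀ S : Multiset H, ℓ ≤ Multiset.card S →
      HasKDisjointZeroSum 1 S } := by
    apply Nat.sInf_mem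
    refine ⟨Fintype.card H, fun S hS => ?_⟩
    obtain ⟨T, hTS, hTne, hTsum⟩ := exists_zero_sum_of_card_le S hS
    exact ⟨{T}, by simp, by simpa [IsZeroSumSeq] using ⟨hTne, hTsum⟩, by simpa using hTS⟩
  intro S hS
  obtain ⟨T, hT1, hTz, hTle⟩ := hmem S hS
  obtain ⟨A, rfl⟩ := Multiset.card_eq_one.mp hT1
  obtain ⟨hAne, hAsum⟩ := hTz A (by simp)
  exact ⟨A, by simpa using hTle, hAne, hAsum⟩

/-- Any nonempty zero-sum sequence contains a minimal one. -/
lemma exists_min_zero_sum {H : Type*} [AddCommGroup H] (A : Multiset H)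
    (hne : A ≠ 0) (hsum : A.sum = 0) : ∃ U ≤ A, IsMinZeroSum U := by
  induction A using Multiset.strongInductionOn with
  | ih A ih =>
    by_cases hmin : IsMinZeroSum A
    · exact ⟨A, le_refl A, hmin⟩
    · simp only [IsMinZeroSum, not_and_or] at hmin
      rcases hmin with h | h | h
      · exact absurd hne (by simpa using h)
      · exact absurd hsum (by simpa using h)
      · push_neg at h
        obtain ⟨T, hTA, hTne, hTsum, hTne'⟩ := h
        obtain ⟨U, hUT, hU⟩ := ih T (lt_of_le_of_ne hTA hTne') hTne hTsum
        exact ⟨U, le_trans hUT hTA, hU⟩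

/-- A minimal zero-sum sequence has length at most the Davenport constant. -/
lemma card_le_of_min {H : Type*} [AddCommGroup H] [Fintype H] [DecidableEq H] (U : Multiset H)
    (hU : IsMinZeroSum U) : Multiset.card U ≤ Dk H 1 := by
  by_contra h
  push_neg at h
  obtain ⟨hUne, hUsum, hUmin⟩ := hU
  obtain ⟨a, ha⟩ := Multiset.exists_mem_of_ne_zero hUne
  have hcard : Multiset.card (U.erase a) = Multiset.card U - 1 :=
    Multiset.card_erase_of_mem ha
  obtain ⟨V, hVU, hVne, hVsum⟩ := Dk_one_spec (U.erase a) (by omega)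
  have hVU' : V ≤ U := le_trans hVU (Multiset.erase_le a U)
  have := hUmin V hVU' hVne hVsum
  subst this
  have := Multiset.card_le_card hVU
  omega


theorem statement7 {G : Type*} [AddCommGroup G] [Fintype G] (n : ℕ) [NeZero n] :
    ∀ S : Multiset G, Dk (G × ZMod n) 1 ≤ Multiset.card S →
      ∃ T ≤ S, T ≠ 0 ∧ T.sum = 0 ∧
        Multiset.card T ≤
          max (Dk (G × ZMod n) 1 / n * n / 2) (Dk G 1 / n * n) := by
  classical
  intro S hS
  set f : G → G × ZMod n := fun g => (g, (1 : ZMod n)) with hf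
  set S' : Multiset (G × ZMod n) := S.map f with hS'
  have hcard' : Multiset.card S' = Multiset.card S := by simp [hS']
  obtain ⟨A', hA'S, hA'ne, hA'sum⟩ := Dk_one_spec S' (by omega)
  obtain ⟨U', hU'A, hU'min⟩ := exists_min_zero_sum A' hA'ne hA'sum
  have hU'S : U' ≤ S' := le_trans hU'A hA'S
  have hU'card : Multiset.card U' ≤ Dk (G × ZMod n) 1 := card_le_of_min U' hU'min
  obtain ⟨hU'ne, hU'sum, hU'minp⟩ := hU'min
  -- all second coordinates are 1
  have hsnd : ∀ x ∈ U', x.2 = (1 : ZMod n) := by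
    intro x hx
    have hx' : x ∈ S' := Multiset.mem_of_le hU'S hx
    rw [hS', Multiset.mem_map] at hx'
    obtain ⟨g, _, rfl⟩ := hx'
    rfl
  -- sum of second coordinates
  have hsum2 : ((Multiset.card U' : ℕ) : ZMod n) = 0 := by
    have h1 : U'.sum.2 = 0 := by rw [hU'sum]; rfl
    have h2 : U'.sum.2 = (U'.map Prod.snd).sum := by
      exact map_multiset_sum (AddMonoidHom.snd G (ZMod n)) U'
    have h3 : U'.map Prod.snd = Multiset.replicate (Multiset.card U') (1 : ZMod n) := by
      rw [Multiset.eq_replicate]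
      constructor
      · simp
      · intro b hb
        rw [Multiset.mem_map] at hb
        obtain ⟨x, hx, rfl⟩ := hb
        exact hsnd x hx
    rw [h2, h3, Multiset.sum_replicate, nsmul_eq_mul, mul_one] at h1
    exact h1
  have hdvd : n ∣ Multiset.card U' := (ZMod.natCast_eq_zero_iff _ _).mp hsum2
  -- project to G
  set T : Multiset G := U'.map Prod.fst with hT
  have hTS : T ≤ S := by
    have := Multiset.map_le_map (f := Prod.fst) hU'S
    simpa [hS', hT, hf, Multiset.map_map, Function.comp] using this
  have hTcard : Multiset.card T = Multiset.card U' := by simp [hT]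
  have hTne : T ≠ 0 := by
    simp only [hT, ne_eq, Multiset.map_eq_zero]
    exact hU'ne
  have hTsum : T.sum = 0 := by
    have : T.sum = U'.sum.1 :=
      (map_multiset_sum (AddMonoidHom.fst G (ZMod n)) U').symm
    rw [this, hU'sum]; rfl
  set ℓ := Multiset.card T with hℓ
  have hℓdvd : n ∣ ℓ := hTcard ▸ hdvd
  have hℓle : ℓ ≤ Dk (G × ZMod n) 1 := hTcard ▸ hU'card
  have hℓbound : ℓ ≤ Dk (G × ZMod n) 1 / n * n := by
    have hk' : ℓ / n * n = ℓ := Nat.div_mul_cancel hℓdvd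
    calc ℓ = ℓ / n * n := hk'.symm
      _ ≤ Dk (G × ZMod n) 1 / n * n :=
          Nat.mul_le_mul_right n (Nat.div_le_div_right hℓle)
  -- minimal zero-sum inside T over G
  obtain ⟨U, hUT, hUmin⟩ := exists_min_zero_sum T hTne hTsum
  obtain ⟨hUne, hUsum, hUminp⟩ := hUmin
  by_cases hUeq : U = T
  · -- T is minimal over G
    have hTmin : IsMinZeroSum T := hUeq ▸ ⟨hUne, hUsum, hUminp⟩
    have hTD : ℓ ≤ Dk G 1 := card_le_of_min T hTmin
    refine ⟨T, hTS, hTne, hTsum, le_max_of_le_right ?_⟩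
    have hk' : ℓ / n * n = ℓ := Nat.div_mul_cancel hℓdvd
    calc Multiset.card T = ℓ / n * n := hk'.symm
      _ ≤ Dk G 1 / n * n := Nat.mul_le_mul_right n (Nat.div_le_div_right hTD)
  · -- proper split: take the smaller of U and T - U
    set W : Multiset G := T - U with hW
    have hWT : W ≤ T := Multiset.sub_le_self T U
    have hUW : U + W = T := by
      rw [hW, add_comm]
      exact tsub_add_cancel_of_le hUT
    have hWsum : W.sum = 0 := by
      have : U.sum + W.sum = T.sum := by rw [← Multiset.sum_add, hUW]
      rw [hUsum, hTsum, zero_add] at this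
      exact this
    have hWne : W ≠ 0 := by
      intro h0
      rw [h0, add_zero] at hUW
      exact hUeq hUW
    have hcards : Multiset.card U + Multiset.card W = ℓ := by
      rw [← Multiset.card_add, hUW]
    have hhalf : Multiset.card U ≤ ℓ / 2 ∨ Multiset.card W ≤ ℓ / 2 := by omega
    have hbound : ℓ / 2 ≤ Dk (G × ZMod n) 1 / n * n / 2 :=
      Nat.div_le_div_right hℓbound
    rcases hhalf with h | h
    · exact ⟨U, le_trans hUT hTS, hUne, hUsum, le_max_of_le_left (le_trans h hbound)⟩
    · exact ⟨W, le_trans hWT hTS, hWne, hWsum, le_max_of_le_left (le_trans h hbound)⟩
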